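/- Consider the system ẋ = f(x) on an open set D ⊆ ℝⁿ with f : D → ℝⁿ continuous, and let h : D → ℝ be continuously differentiable with S = {x ∈ D : h(x) ≥ 0} nonempty. If there exists a minimal function μ : ℝ → ℝ such that L_f h(x) ≥ −μ(h(x)) for all x ∈ D, then S is positively invariant: every solution x : [0,τ) → D of ẋ = f(x) with x(0) ∈ S satisfies x(t) ∈ S for all t ∈ [0,τ). -/

import Mathlib

open Set Filter Topology MeasureTheory intervalIntegral
open scoped NNReal

/-- Comparison lemma: an exact solution of `u' = -F(u)` with Lipschitz `F` stays below any
supersolution `v' ≥ -F(v)` with `u 0 ≤ v 0`. -/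
lemma lipschitz_comparison {F : ℝ → ℝ} {K : ℝ≥0} (hF : LipschitzWith K F) {T : ℝ}
    {u v vd : ℝ → ℝ}
    (hu : ∀ t ∈ Set.Icc (0:ℝ) T, HasDerivAt u (-F (u t)) t)
    (hv : ∀ t ∈ Set.Icc (0:ℝ) T, HasDerivAt v (vd t) t)
    (hvd : ∀ t ∈ Set.Icc (0:ℝ) T, -F (v t) ≤ vd t)
    (h0 : u 0 ≤ v 0) : ∀ t ∈ Set.Icc (0:ℝ) T, u t ≤ v t := by
  by_contra hcon
  push_neg at hcon
  obtain ⟨a, haT, hva⟩ := hcon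
  have ha0 : (0:ℝ) ≤ a := haT.1
  have hsub : Set.Icc (0:ℝ) a ⊆ Set.Icc (0:ℝ) T := Set.Icc_subset_Icc le_rfl haT.2
  have hucont : ContinuousOn u (Set.Icc (0:ℝ) a) := fun t ht =>
    ((hu t (hsub ht)).continuousAt).continuousWithinAt
  have hvcont : ContinuousOn v (Set.Icc (0:ℝ) a) := fun t ht =>
    ((hv t (hsub ht)).continuousAt).continuousWithinAt
  set Z : Set ℝ := Set.Icc (0:ℝ) a ∩ (fun t => u t - v t) ⁻¹' Set.Iic 0 with hZ
  have hZclosed : IsClosed Z :=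
    (hucont.sub hvcont).preimage_isClosed_of_isClosed isClosed_Icc isClosed_Iic
  have hZne : Z.Nonempty := ⟨0, ⟨le_rfl, ha0⟩, by simpa using sub_nonpos.mpr h0⟩
  have hZbdd : BddAbove Z := bddAbove_Icc.mono Set.inter_subset_left
  set s := sSup Z with hs
  have hsZ : s ∈ Z := hZclosed.csSup_mem hZne hZbdd
  have hsIcc : s ∈ Set.Icc (0:ℝ) a := hsZ.1
  have hsuv : u s ≤ v s := by
    have h2 := hsZ.2
    simpa [sub_nonpos] using h2
  have hsa : s < a := by
    rcases lt_or_eq_of_le hsIcc.2 with hlt | heq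
    · exact hlt
    · exfalso; rw [heq] at hsuv; linarith
  have hlt : ∀ t ∈ Set.Ioc s a, v t < u t := by
    intro t ht
    by_contra hle
    push_neg at hle
    have htZ : t ∈ Z := ⟨⟨le_trans hsIcc.1 ht.1.le, ht.2⟩, by simpa [sub_nonpos] using hle⟩
    exact absurd (le_csSup hZbdd htZ) (not_le.mpr ht.1)
  set ψ : ℝ → ℝ := fun t => (u t - v t) * Real.exp (-(K:ℝ) * t) with hψ
  have hψd : ∀ t ∈ Set.Icc (0:ℝ) a,
      HasDerivAt ψ ((-F (u t) - vd t) * Real.exp (-(K:ℝ)*t)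
        + (u t - v t) * (Real.exp (-(K:ℝ)*t) * (-(K:ℝ)))) t := by
    intro t ht
    have h1 : HasDerivAt (fun t : ℝ => -(K:ℝ)*t) (-(K:ℝ)) t := by
      simpa using (hasDerivAt_id t).const_mul (-(K:ℝ))
    have he : HasDerivAt (fun t => Real.exp (-(K:ℝ)*t)) (Real.exp (-(K:ℝ)*t) * (-(K:ℝ))) t :=
      h1.exp
    exact ((hu t (hsub ht)).sub (hv t (hsub ht))).mul he
  have hanti : AntitoneOn ψ (Set.Icc s a) := by
    apply antitoneOn_of_deriv_nonpos (convex_Icc s a)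
    · apply ContinuousOn.mono _ (Set.Icc_subset_Icc hsIcc.1 le_rfl)
      exact (hucont.sub hvcont).mul
        ((Real.continuous_exp.comp (continuous_const.mul continuous_id)).continuousOn)
    · intro t ht
      rw [interior_Icc] at ht
      exact ((hψd t ⟨le_trans hsIcc.1 ht.1.le, ht.2.le⟩).differentiableAt).differentiableWithinAt
    · intro t ht
      rw [interior_Icc] at ht
      have htmem : t ∈ Set.Icc (0:ℝ) a := ⟨le_trans hsIcc.1 ht.1.le, ht.2.le⟩
      rw [(hψd t htmem).deriv]
      have hvu : v t < u t := hlt t ⟨ht.1, ht.2.le⟩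
      have h2 := hF.dist_le_mul (u t) (v t)
      rw [Real.dist_eq, Real.dist_eq] at h2
      have h3 : |u t - v t| = u t - v t := abs_of_pos (by linarith)
      have h4 : F (v t) - F (u t) ≤ |F (u t) - F (v t)| := by
        rw [abs_sub_comm]; exact le_abs_self _
      have h5 := hvd t (hsub htmem)
      have h6 : -F (u t) - vd t ≤ (K:ℝ) * (u t - v t) := by
        rw [h3] at h2; linarith
      have hexp := Real.exp_pos (-(K:ℝ)*t)
      nlinarith [mul_le_mul_of_nonneg_right h6 hexp.le]
  have h1 : ψ a ≤ ψ s := hanti ⟨le_rfl, hsa.le⟩ ⟨hsa.le, le_rfl⟩ hsa.le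
  have hes := Real.exp_pos (-(K:ℝ)*s)
  have hea := Real.exp_pos (-(K:ℝ)*a)
  have hψa : 0 < ψ a := by
    rw [hψ]
    exact mul_pos (by simp; linarith) hea
  have hψs : ψ s ≤ 0 := by
    rw [hψ]
    exact mul_nonpos_iff.mpr (Or.inr ⟨by simp; linarith, hes.le⟩)
  linarith

/-- Global solutions for a bounded globally-Lipschitz autonomous scalar ODE. -/
lemma ode_exist {F : ℝ → ℝ} {K : ℝ≥0} (hF : LipschitzWith K F) {B : ℝ}
    (hB : ∀ y, |F y| ≤ B) {T : ℝ} (hT : 0 < T) :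
    ∃ u : ℝ → ℝ, u 0 = 0 ∧ ∀ t ∈ Set.Icc (0:ℝ) T, HasDerivAt u (-F (u t)) t := by
  have hB0 : 0 ≤ B := le_trans (abs_nonneg _) (hB 0)
  have hpl : IsPicardLindelof (fun _ y => -F y) (tmin := -1) (tmax := T+1)
      ⟨0, by constructor <;> linarith⟩ (0:ℝ) ⟨B*(T+1), by positivity⟩ 0 ⟨B, hB0⟩ K :=
    { lipschitzOnWith := fun t _ => (LipschitzWith.neg hF).lipschitzOnWith
      continuousOn := fun _ _ => continuousOn_const
      norm_le := fun t _ y _ => by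
        rw [Real.norm_eq_abs, abs_neg]; exact hB y
      mul_max_le := by
        have h1 : max (T+1-0) (0-(-1)) = T+1 := by
          rw [max_eq_left (by linarith)]; ring
        show B * max (T+1-0) (0-(-1)) ≤ B*(T+1) - 0
        rw [h1, sub_zero] }
  obtain ⟨u, hu0, hud⟩ := hpl.exists_eq_forall_mem_Icc_hasDerivWithinAt₀
  refine ⟨u, hu0, fun t ht => ?_⟩
  exact (hud t ⟨by linarith [ht.1], by linarith [ht.2]⟩).hasDerivAt
    (Icc_mem_nhds (by linarith [ht.1]) (by linarith [ht.2]))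

/-- Running minimum of a sequence of functions. -/
def minSeq (q : ℕ → ℝ → ℝ) : ℕ → ℝ → ℝ
  | 0 => q 0
  | (k+1) => fun y => min (minSeq q k y) (q (k+1) y)

/-- A continuous function `μ : ℝ → ℝ` is a minimal function if for every `τ > 0`, every
differentiable `w : [0,τ) → ℝ` with `w(0) = 0` and `ẇ(t) = −μ(w(t))` satisfies `w(t) ≥ 0`. -/
def IsMinimalFunction (μ : ℝ → ℝ) : Prop :=
  Continuous μ ∧
    ∀ τ : ℝ, 0 < τ → ∀ w : ℝ → ℝ, w 0 = 0 →
      (∀ t ∈ Set.Ico (0 : ℝ) τ, HasDerivAt w (-μ (w t)) t) →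
      ∀ t ∈ Set.Ico (0 : ℝ) τ, 0 ≤ w t

/-- if `h` is a minimal barrier function, i.e. there is a minimal function `μ`
with `L_f h(x) ≥ −μ(h(x))` on `D`, then `S = {x ∈ D : h(x) ≥ 0}` is positively invariant. -/
theorem minimal_barrier_function_invariance
    {n : ℕ} (D : Set (EuclideanSpace ℝ (Fin n))) (hD : IsOpen D)
    (f : EuclideanSpace ℝ (Fin n) → EuclideanSpace ℝ (Fin n)) (hf : ContinuousOn f D)
    (h : EuclideanSpace ℝ (Fin n) → ℝ) (hh : ContDiffOn ℝ 1 h D)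
    (hSne : ∃ x ∈ D, 0 ≤ h x)
    (μ : ℝ → ℝ) (hμ : IsMinimalFunction μ)
    (hbar : ∀ x ∈ D, -μ (h x) ≤ fderiv ℝ h x (f x))
    (τ : ℝ) (x : ℝ → EuclideanSpace ℝ (Fin n))
    (hxD : ∀ t ∈ Set.Ico (0 : ℝ) τ, x t ∈ D)
    (hxsol : ∀ t ∈ Set.Ico (0 : ℝ) τ, HasDerivAt x (f (x t)) t)
    (hx0 : 0 ≤ h (x 0)) :
    ∀ t ∈ Set.Ico (0 : ℝ) τ, 0 ≤ h (x t) := by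
  obtain ⟨hμc, hμmin⟩ := hμ
  by_contra hcon
  push_neg at hcon
  obtain ⟨t₁, ht₁, hneg₁⟩ := hcon
  -- the scalar function along the trajectory and its derivative
  set g : ℝ → ℝ := fun t => h (x t) with hg
  set d : ℝ → ℝ := fun t => fderiv ℝ h (x t) (f (x t)) with hd
  have hgd : ∀ t ∈ Set.Ico (0:ℝ) τ, HasDerivAt g (d t) t := by
    intro t ht
    have hdiff : DifferentiableAt ℝ h (x t) :=
      (hh.differentiableOn one_ne_zero).differentiableAt (hD.mem_nhds (hxD t ht))
    exact hdiff.hasFDerivAt.comp_hasDerivAt t (hxsol t ht)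
  have hdge : ∀ t ∈ Set.Ico (0:ℝ) τ, -μ (g t) ≤ d t := fun t ht => hbar (x t) (hxD t ht)
  have ht₁0 : 0 < t₁ := by
    rcases lt_or_eq_of_le ht₁.1 with hlt | heq
    · exact hlt
    · exfalso; rw [← heq] at hneg₁; linarith
  have hIccsub : Set.Icc (0:ℝ) t₁ ⊆ Set.Ico (0:ℝ) τ :=
    fun s hs => ⟨hs.1, lt_of_le_of_lt hs.2 ht₁.2⟩
  have hgcont : ContinuousOn g (Set.Icc 0 t₁) :=
    fun s hs => ((hgd s (hIccsub hs)).continuousAt).continuousWithinAt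
  -- last zero of g before t₁
  set Z : Set ℝ := Set.Icc 0 t₁ ∩ g ⁻¹' {0} with hZ
  have hZclosed : IsClosed Z :=
    hgcont.preimage_isClosed_of_isClosed isClosed_Icc isClosed_singleton
  have hZne : Z.Nonempty := by
    have h0m : (0:ℝ) ∈ Set.Icc (g t₁) (g 0) := ⟨hneg₁.le, hx0⟩
    obtain ⟨c, hc, hgc⟩ := intermediate_value_Icc' ht₁0.le hgcont h0m
    exact ⟨c, hc, hgc⟩
  have hZbdd : BddAbove Z := bddAbove_Icc.mono Set.inter_subset_left
  set t₀ := sSup Z with ht₀def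
  have ht₀Z : t₀ ∈ Z := hZclosed.csSup_mem hZne hZbdd
  have hgt₀ : g t₀ = 0 := ht₀Z.2
  have ht₀Icc : t₀ ∈ Set.Icc (0:ℝ) t₁ := ht₀Z.1
  have ht₀1 : t₀ < t₁ := by
    rcases lt_or_eq_of_le ht₀Icc.2 with hlt | heq
    · exact hlt
    · exfalso; rw [heq] at hgt₀; rw [hg] at hgt₀; simp at hgt₀; linarith
  have hgneg : ∀ s ∈ Set.Ioc t₀ t₁, g s < 0 := by
    intro s hs
    rcases lt_trichotomy (g s) 0 with hl | he | hgt
    · exact hl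
    · exfalso
      have hsZ : s ∈ Z := ⟨⟨le_trans ht₀Icc.1 hs.1.le, hs.2⟩, he⟩
      exact absurd (le_csSup hZbdd hsZ) (not_le.mpr hs.1)
    · exfalso
      have hsub2 : ContinuousOn g (Set.Icc s t₁) :=
        hgcont.mono (Set.Icc_subset_Icc (le_trans ht₀Icc.1 hs.1.le) le_rfl)
      have h0m : (0:ℝ) ∈ Set.Icc (g t₁) (g s) := ⟨hneg₁.le, hgt.le⟩
      obtain ⟨c, hc, hgc⟩ := intermediate_value_Icc' hs.2 hsub2 h0m
      have hcZ : c ∈ Z := ⟨⟨le_trans (le_trans ht₀Icc.1 hs.1.le) hc.1, hc.2⟩, hgc⟩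
      have := le_csSup hZbdd hcZ
      linarith [hc.1, hs.1]
  -- shifted function G
  set T := t₁ - t₀ with hT
  have hTpos : 0 < T := by rw [hT]; linarith
  set G : ℝ → ℝ := fun s => g (t₀ + s) with hG
  have hmapsto : ∀ s ∈ Set.Icc (0:ℝ) T, t₀ + s ∈ Set.Ico (0:ℝ) τ := by
    intro s hs
    constructor
    · linarith [ht₀Icc.1, hs.1]
    · have : t₀ + s ≤ t₁ := by rw [hT] at hs; linarith [hs.2]
      linarith [ht₁.2]
  have hGd : ∀ s ∈ Set.Icc (0:ℝ) T, HasDerivAt G (d (t₀ + s)) s := by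
    intro s hs
    have hcomp := (hgd (t₀ + s) (hmapsto s hs)).comp s ((hasDerivAt_id s).const_add t₀)
    rw [hG]
    rw [mul_one] at hcomp
    exact hcomp
  have hGcont : ContinuousOn G (Set.Icc (0:ℝ) T) :=
    fun s hs => ((hGd s hs).continuousAt).continuousWithinAt
  have hG0 : G 0 = 0 := by rw [hG]; simpa using hgt₀
  have hGneg : ∀ s ∈ Set.Ioc (0:ℝ) T, G s < 0 := by
    intro s hs
    rw [hG]
    exact hgneg (t₀ + s) ⟨by linarith [hs.1], by rw [hT] at hs; linarith [hs.2]⟩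
  -- minimum of G, the value-interval J = [m-1, 0]
  obtain ⟨sm, hsmIcc, hsmmin⟩ :=
    isCompact_Icc.exists_isMinOn (Set.nonempty_Icc.mpr hTpos.le) hGcont
  set m := G sm with hm
  have hmle : ∀ s ∈ Set.Icc (0:ℝ) T, m ≤ G s := fun s hs => hsmmin hs
  have hm0 : m ≤ 0 := by
    have := hmle 0 ⟨le_rfl, hTpos.le⟩
    rw [hG0] at this; linarith [this]
  have hGle0 : ∀ s ∈ Set.Icc (0:ℝ) T, G s ≤ 0 := by
    intro s hs
    rcases lt_or_eq_of_le hs.1 with hlt | heq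
    · exact (hGneg s ⟨hlt, hs.2⟩).le
    · rw [← heq, hG0]
  have hGJ : ∀ s ∈ Set.Icc (0:ℝ) T, G s ∈ Set.Icc (m-1) 0 :=
    fun s hs => ⟨by linarith [hmle s hs], hGle0 s hs⟩
  -- bound for μ on J
  obtain ⟨Mb, hMb⟩ :=
    (isCompact_Icc (a := m-1) (b := 0)).exists_bound_of_continuousOn hμc.continuousOn
  set B := |Mb| + 2 with hB
  have hBpos : (0:ℝ) < B := by rw [hB]; positivity
  have hMb' : ∀ y ∈ Set.Icc (m-1) (0:ℝ), |μ y| ≤ |Mb| := by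
    intro y hy
    have := hMb y hy
    rw [Real.norm_eq_abs] at this
    exact this.trans (le_abs_self Mb)
  -- polynomial approximations from above
  choose p hp using fun i : ℕ =>
    exists_polynomial_near_of_continuousOn (m-1) 0 μ hμc.continuousOn (((i:ℝ)+1)⁻¹)
      (by positivity)
  -- clamp to J
  set c : ℝ → ℝ := fun y => max (m-1) (min y 0) with hc
  have hclip : LipschitzWith 1 c := by
    have h1 := (LipschitzWith.id (α := ℝ)).min_const 0
    exact h1.const_max (m-1)
  have hcJ : ∀ y, c y ∈ Set.Icc (m-1) (0:ℝ) := by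
    intro y
    exact ⟨le_max_left _ _, max_le (by linarith) (min_le_right _ _)⟩
  have hceq : ∀ y ∈ Set.Icc (m-1) (0:ℝ), c y = y := by
    intro y hy
    rw [hc]
    simp only [min_eq_left hy.2]
    exact max_eq_right hy.1
  set q : ℕ → ℝ → ℝ := fun i y => (p i).eval (c y) + ((i:ℝ)+1)⁻¹ with hq
  have hqlow : ∀ i y, μ (c y) ≤ q i y := by
    intro i y
    have habs := abs_lt.mp (hp i (c y) (hcJ y))
    rw [hq]; simp only []
    linarith [habs.1]
  have hqhigh : ∀ i y, q i y ≤ μ (c y) + 2*((i:ℝ)+1)⁻¹ := by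
    intro i y
    have habs := abs_lt.mp (hp i (c y) (hcJ y))
    rw [hq]; simp only []
    linarith [habs.2]
  have hqlip : ∀ i, ∃ K : ℝ≥0, LipschitzWith K (q i) := by
    intro i
    obtain ⟨Kd, hKd⟩ := (isCompact_Icc (a := m-1) (b := 0)).exists_bound_of_continuousOn
      ((p i).derivative.continuous_aeval.continuousOn)
    refine ⟨Real.toNNReal Kd, LipschitzWith.of_dist_le_mul fun y z => ?_⟩
    have hlipOn : LipschitzOnWith (Real.toNNReal Kd) (fun y => (p i).eval y)
        (Set.Icc (m-1) 0) := by
      apply Convex.lipschitzOnWith_of_nnnorm_deriv_le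
        (fun y _ => (p i).differentiableAt) ?_ (convex_Icc _ _)
      intro y hy
      rw [Polynomial.deriv, ← NNReal.coe_le_coe, coe_nnnorm, Real.coe_toNNReal']
      exact le_trans (by simpa using hKd y hy) (le_max_left _ _)
    have h1 : dist (q i y) (q i z) = dist ((p i).eval (c y)) ((p i).eval (c z)) := by
      rw [hq]; simp only [Real.dist_eq]
      ring_nf
    rw [h1]
    calc dist ((p i).eval (c y)) ((p i).eval (c z))
        ≤ (Real.toNNReal Kd : ℝ) * dist (c y) (c z) :=
          hlipOn.dist_le_mul _ (hcJ y) _ (hcJ z)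
      _ ≤ (Real.toNNReal Kd : ℝ) * dist y z := by
          apply mul_le_mul_of_nonneg_left _ (NNReal.coe_nonneg _)
          simpa using hclip.dist_le_mul y z
  -- the decreasing sequence of Lipschitz majorants
  have hFlow : ∀ k y, μ (c y) ≤ minSeq q k y ∧ minSeq q k y ≤ μ (c y) + 2*((k:ℝ)+1)⁻¹ := by
    intro k
    induction k with
    | zero => exact fun y => ⟨hqlow 0 y, by simpa [minSeq] using hqhigh 0 y⟩
    | succ k ih =>
      intro y
      constructor
      · rw [minSeq]
        exact le_min (ih y).1 (hqlow (k+1) y)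
      · rw [minSeq]
        exact (min_le_right _ _).trans (hqhigh (k+1) y)
  have hFlip : ∀ k, ∃ K : ℝ≥0, LipschitzWith K (minSeq q k) := by
    intro k
    induction k with
    | zero => exact hqlip 0
    | succ k ih =>
      obtain ⟨K1, hK1⟩ := ih
      obtain ⟨K2, hK2⟩ := hqlip (k+1)
      refine ⟨max K1 K2, ?_⟩
      have : minSeq q (k+1) = fun y => min (minSeq q k y) (q (k+1) y) := rfl
      rw [this]
      exact hK1.min hK2
  have hFanti : ∀ k y, minSeq q (k+1) y ≤ minSeq q k y := by
    intro k y
    have : minSeq q (k+1) y = min (minSeq q k y) (q (k+1) y) := rfl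
    rw [this]
    exact min_le_left _ _
  have hFbdd : ∀ k y, |minSeq q k y| ≤ B := by
    intro k y
    have h1 := (hFlow k y).1
    have h2 := (hFlow k y).2
    have h3 := abs_le.mp (hMb' (c y) (hcJ y))
    have hpos : (0:ℝ) < (k:ℝ)+1 := by positivity
    have hc1 : ((k:ℝ)+1) * ((k:ℝ)+1)⁻¹ = 1 := mul_inv_cancel₀ (ne_of_gt hpos)
    have hinv0 : (0:ℝ) ≤ ((k:ℝ)+1)⁻¹ := inv_nonneg.mpr hpos.le
    have h4 : ((k:ℝ)+1)⁻¹ ≤ 1 := by nlinarith [Nat.cast_nonneg (α := ℝ) k]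
    rw [abs_le, hB]
    constructor
    · linarith [h3.1]
    · linarith [h3.2]
  -- the time horizon
  set T' := min T (1/(B+1)) with hT'
  have hT'pos : 0 < T' := lt_min hTpos (by positivity)
  have hT'leT : T' ≤ T := min_le_left _ _
  have hT'le : T' ≤ 1/(B+1) := min_le_right _ _
  have hIccT' : Set.Icc (0:ℝ) T' ⊆ Set.Icc (0:ℝ) T := Set.Icc_subset_Icc le_rfl hT'leT
  -- solutions of the approximating ODEs
  have hex : ∀ k, ∃ u : ℝ → ℝ, u 0 = 0 ∧
      ∀ t ∈ Set.Icc (0:ℝ) T', HasDerivAt u (-minSeq q k (u t)) t := by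
    intro k
    obtain ⟨K, hK⟩ := hFlip k
    exact ode_exist hK (hFbdd k) hT'pos
  choose u hu0 hud using hex
  have hucont : ∀ k, ContinuousOn (u k) (Set.Icc (0:ℝ) T') :=
    fun k t ht => ((hud k t ht).continuousAt).continuousWithinAt
  have hFcont : ∀ k, Continuous (minSeq q k) := fun k => (hFlip k).choose_spec.continuous
  have huint : ∀ k, ∀ t ∈ Set.Icc (0:ℝ) T',
      u k t = -∫ s in (0:ℝ)..t, minSeq q k (u k s) := by
    intro k t ht
    have huIcc : Set.uIcc (0:ℝ) t = Set.Icc 0 t := Set.uIcc_of_le ht.1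
    have hsubt : Set.Icc (0:ℝ) t ⊆ Set.Icc (0:ℝ) T' := Set.Icc_subset_Icc le_rfl ht.2
    have hderiv : ∀ s ∈ Set.uIcc (0:ℝ) t, HasDerivAt (u k) (-minSeq q k (u k s)) s := by
      rw [huIcc]; exact fun s hs => hud k s (hsubt hs)
    have hint : IntervalIntegrable (fun s => -minSeq q k (u k s)) MeasureTheory.volume 0 t := by
      apply ContinuousOn.intervalIntegrable
      rw [huIcc]
      exact ((hFcont k).comp_continuousOn ((hucont k).mono hsubt)).neg
    have heq := intervalIntegral.integral_eq_sub_of_hasDerivAt hderiv hint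
    rw [hu0 k, sub_zero] at heq
    rw [← heq, intervalIntegral.integral_neg]
  have hubd : ∀ k, ∀ t ∈ Set.Icc (0:ℝ) T', |u k t| ≤ B * t := by
    intro k t ht
    rw [huint k t ht, abs_neg]
    have hle := intervalIntegral.norm_integral_le_of_norm_le_const
      (C := B) (f := fun s => minSeq q k (u k s)) (a := 0) (b := t)
      (fun s _ => by rw [Real.norm_eq_abs]; exact hFbdd k (u k s))
    rw [Real.norm_eq_abs, sub_zero, abs_of_nonneg ht.1] at hle
    exact hle
  -- comparison: u k ≤ G
  have hucompG : ∀ k, ∀ t ∈ Set.Icc (0:ℝ) T', u k t ≤ G t := by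
    intro k
    obtain ⟨K, hK⟩ := hFlip k
    refine lipschitz_comparison hK (hud k) (fun t ht => hGd t (hIccT' ht)) ?_ ?_
    · intro t ht
      have h1 : μ (G t) ≤ minSeq q k (G t) := by
        have h2 := (hFlow k (G t)).1
        rwa [hceq _ (hGJ t (hIccT' ht))] at h2
      have h3 : -μ (g (t₀ + t)) ≤ d (t₀ + t) := hdge (t₀ + t) (hmapsto t (hIccT' ht))
      have h4 : G t = g (t₀ + t) := by simp only [hG]
      rw [h4] at h1
      linarith
    · rw [hu0 k, hG0]
  -- monotonicity in k
  have humono : ∀ k, ∀ t ∈ Set.Icc (0:ℝ) T', u k t ≤ u (k+1) t := by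
    intro k
    obtain ⟨K, hK⟩ := hFlip k
    refine lipschitz_comparison hK (hud k) (hud (k+1)) ?_ ?_
    · intro t ht
      have := hFanti k (u (k+1) t)
      linarith
    · rw [hu0 k, hu0 (k+1)]
  have humono' : ∀ t ∈ Set.Icc (0:ℝ) T', Monotone fun k => u k t :=
    fun t ht => monotone_nat_of_le_succ fun k => humono k t ht
  have hubdd : ∀ t ∈ Set.Icc (0:ℝ) T', BddAbove (Set.range fun k => u k t) := by
    intro t ht
    refine ⟨G t, ?_⟩
    rintro y ⟨k, rfl⟩
    exact hucompG k t ht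
  -- the limit function
  set π : ℝ → ℝ := fun s => min (max s 0) T' with hπ
  have hπcont : Continuous π := (continuous_id.max continuous_const).min continuous_const
  have hπmem : ∀ s, π s ∈ Set.Icc (0:ℝ) T' :=
    fun s => ⟨le_min (le_max_right _ _) hT'pos.le, min_le_right _ _⟩
  have hπid : ∀ s ∈ Set.Icc (0:ℝ) T', π s = s := by
    intro s hs
    simp only [hπ]
    rw [max_eq_left hs.1, min_eq_left hs.2]
  set w : ℝ → ℝ := fun t => ⨆ k, u k (π t) with hw
  have hwtend : ∀ t, Filter.Tendsto (fun k => u k (π t)) Filter.atTop (nhds (w t)) := by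
    intro t
    simp only [hw]
    exact tendsto_atTop_ciSup (humono' (π t) (hπmem t)) (hubdd (π t) (hπmem t))
  have hwt : ∀ t ∈ Set.Icc (0:ℝ) T',
      Filter.Tendsto (fun k => u k t) Filter.atTop (nhds (w t)) := by
    intro t ht
    have := hwtend t
    rwa [hπid t ht] at this
  have hwle : ∀ t ∈ Set.Icc (0:ℝ) T', w t ≤ G t :=
    fun t ht => le_of_tendsto (hwt t ht) (Filter.Eventually.of_forall fun k => hucompG k t ht)
  have hukmem : ∀ k, ∀ s ∈ Set.Icc (0:ℝ) T', u k s ∈ Set.Icc (m-1) (0:ℝ) := by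
    intro k s hs
    have h1 := hubd k s hs
    have h2 : B * s ≤ 1 := by
      have h3 : B * s ≤ B * (1/(B+1)) :=
        mul_le_mul_of_nonneg_left (hs.2.trans hT'le) hBpos.le
      have h4 : B * (1/(B+1)) ≤ 1 := by
        rw [mul_one_div, div_le_one (by positivity)]; linarith
      exact h3.trans h4
    constructor
    · have := (abs_le.mp h1).1; linarith [hm0]
    · exact (hucompG k s hs).trans (hGle0 s (hIccT' hs))
  have hwmem : ∀ s ∈ Set.Icc (0:ℝ) T', w s ∈ Set.Icc (m-1) (0:ℝ) := by
    intro s hs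
    constructor
    · exact ge_of_tendsto (hwt s hs) (Filter.Eventually.of_forall fun k => (hukmem k s hs).1)
    · exact (hwle s hs).trans (hGle0 s (hIccT' hs))
  have hwmeas : Measurable w := by
    refine measurable_of_tendsto_metrizable' Filter.atTop
      (fun k => ((hucont k).comp_continuous hπcont hπmem).measurable) ?_
    rw [tendsto_pi_nhds]
    exact hwtend
  -- integral equation for w
  have hwint : ∀ t ∈ Set.Icc (0:ℝ) T', w t = -∫ s in (0:ℝ)..t, μ (w s) := by
    intro t ht
    have huIoc : Set.uIoc (0:ℝ) t = Set.Ioc 0 t := Set.uIoc_of_le ht.1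
    have hIocsub : Set.Ioc (0:ℝ) t ⊆ Set.Icc (0:ℝ) T' :=
      fun s hs => ⟨hs.1.le, hs.2.trans ht.2⟩
    have h2 : Filter.Tendsto (fun k => ∫ s in (0:ℝ)..t, minSeq q k (u k s)) Filter.atTop
        (nhds (∫ s in (0:ℝ)..t, μ (w s))) := by
      apply intervalIntegral.tendsto_integral_filter_of_dominated_convergence (fun _ => B)
      · refine Filter.Eventually.of_forall fun k => ?_
        rw [huIoc]
        exact ((hFcont k).comp_continuousOn
          ((hucont k).mono hIocsub)).aestronglyMeasurable measurableSet_Ioc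
      · refine Filter.Eventually.of_forall fun k => ae_of_all _ fun s _ => ?_
        rw [Real.norm_eq_abs]; exact hFbdd k (u k s)
      · exact intervalIntegrable_const
      · refine ae_of_all _ fun s hs => ?_
        have hsmem : s ∈ Set.Icc (0:ℝ) T' := hIocsub (huIoc ▸ hs)
        have h1 : Filter.Tendsto (fun k => μ (u k s)) Filter.atTop (nhds (μ (w s))) :=
          Filter.Tendsto.comp hμc.continuousAt (hwt s hsmem)
        have h2' : Filter.Tendsto (fun k => minSeq q k (u k s) - μ (u k s))
            Filter.atTop (nhds 0) := by
          have hbnd : ∀ k : ℕ, ‖minSeq q k (u k s) - μ (u k s)‖ ≤ 2*((k:ℝ)+1)⁻¹ := by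
            intro k
            have h3 := hFlow k (u k s)
            rw [hceq _ (hukmem k s hsmem)] at h3
            have h5 : (0:ℝ) ≤ 2*((k:ℝ)+1)⁻¹ := by positivity
            rw [Real.norm_eq_abs, abs_le]
            exact ⟨by linarith [h3.1], by linarith [h3.2]⟩
          have htnd : Filter.Tendsto (fun k : ℕ => 2*((k:ℝ)+1)⁻¹) Filter.atTop (nhds 0) := by
            have h5 := tendsto_one_div_add_atTop_nhds_zero_nat.const_mul (2:ℝ)
            simpa [one_div] using h5
          exact squeeze_zero_norm hbnd htnd
        have h6 := h2'.add h1
        simpa using h6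
    have h3 : Filter.Tendsto (fun k => u k t) Filter.atTop (nhds (w t)) := hwt t ht
    have h4 : (fun k => u k t) = fun k => -∫ s in (0:ℝ)..t, minSeq q k (u k s) :=
      funext fun k => huint k t ht
    rw [h4] at h3
    exact tendsto_nhds_unique h3 h2.neg
  -- interval integrability of μ ∘ w
  have hμw_meas : ∀ a b : ℝ, MeasureTheory.AEStronglyMeasurable (fun s => μ (w s))
      (MeasureTheory.volume.restrict (Set.uIoc a b)) :=
    fun a b => ((hμc.measurable.comp hwmeas).aestronglyMeasurable).restrict
  have hμwii : IntervalIntegrable (fun s => μ (w s)) MeasureTheory.volume 0 T' := by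
    refine IntervalIntegrable.mono_fun (_root_.intervalIntegrable_const (c := B)) (hμw_meas 0 T') ?_
    refine (MeasureTheory.ae_restrict_iff' measurableSet_uIoc).mpr (ae_of_all _ fun s hs => ?_)
    have hsmem : s ∈ Set.Icc (0:ℝ) T' := by
      rw [Set.uIoc_of_le hT'pos.le] at hs; exact ⟨hs.1.le, hs.2⟩
    simp only [Real.norm_eq_abs, abs_of_pos hBpos, hB]
    linarith [hMb' (w s) (hwmem s hsmem), abs_of_pos (show (0:ℝ) < |Mb| + 2 by positivity)]
  -- w is Lipschitz on [0,T'], hence continuous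
  have hwlip : ∀ t1 ∈ Set.Icc (0:ℝ) T', ∀ t2 ∈ Set.Icc (0:ℝ) T',
      |w t2 - w t1| ≤ B * |t2 - t1| := by
    intro t1 h1 t2 h2
    have hmem1 : t1 ∈ Set.uIcc (0:ℝ) T' := by rw [Set.uIcc_of_le hT'pos.le]; exact h1
    have hmem2 : t2 ∈ Set.uIcc (0:ℝ) T' := by rw [Set.uIcc_of_le hT'pos.le]; exact h2
    have hmem0 : (0:ℝ) ∈ Set.uIcc (0:ℝ) T' := Set.left_mem_uIcc
    have hii1 : IntervalIntegrable (fun s => μ (w s)) MeasureTheory.volume 0 t1 :=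
      hμwii.mono_set (Set.uIcc_subset_uIcc hmem0 hmem1)
    have hii2 : IntervalIntegrable (fun s => μ (w s)) MeasureTheory.volume 0 t2 :=
      hμwii.mono_set (Set.uIcc_subset_uIcc hmem0 hmem2)
    have heq : w t2 - w t1 = -∫ s in t1..t2, μ (w s) := by
      have h5 := intervalIntegral.integral_interval_sub_left hii2 hii1
      rw [hwint t2 h2, hwint t1 h1]
      linarith [h5]
    rw [heq, abs_neg]
    have h6 := intervalIntegral.norm_integral_le_of_norm_le_const
      (C := B) (f := fun s => μ (w s)) (a := t1) (b := t2) ?_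
    · rw [Real.norm_eq_abs] at h6; exact h6
    · intro s hs
      have hsmem : s ∈ Set.Icc (0:ℝ) T' := by
        rcases le_total t1 t2 with hc | hc
        · rw [Set.uIoc_of_le hc] at hs
          exact ⟨h1.1.trans hs.1.le, hs.2.trans h2.2⟩
        · rw [Set.uIoc_comm, Set.uIoc_of_le hc] at hs
          exact ⟨h2.1.trans hs.1.le, hs.2.trans h1.2⟩
      rw [Real.norm_eq_abs]
      refine (hMb' (w s) (hwmem s hsmem)).trans ?_
      rw [hB]; linarith
  have hwcontOn : ContinuousOn w (Set.Icc (0:ℝ) T') := by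
    have hlip : LipschitzOnWith (Real.toNNReal B) w (Set.Icc (0:ℝ) T') := by
      apply LipschitzOnWith.of_dist_le_mul
      intro a ha b hb
      rw [Real.dist_eq, Real.dist_eq, Real.coe_toNNReal']
      refine (hwlip b hb a ha).trans ?_
      exact mul_le_mul_of_nonneg_right (le_max_left _ _) (abs_nonneg _)
    exact hlip.continuousOn
  have hwπ : w = fun t => w (π t) := by
    funext t
    have h7 : π (π t) = π t := hπid (π t) (hπmem t)
    simp only [hw]
    rw [h7]
  have hwcont : Continuous w := by
    rw [hwπ]
    exact hwcontOn.comp_continuous hπcont hπmem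
  -- the exact solution W of the minimal ODE
  set W : ℝ → ℝ := fun t => -∫ s in (0:ℝ)..t, μ (w s) with hW
  have hWw : ∀ t ∈ Set.Icc (0:ℝ) T', W t = w t := by
    intro t ht
    simp only [hW]
    exact (hwint t ht).symm
  have hμwcont : Continuous fun s => μ (w s) := hμc.comp hwcont
  have hWd : ∀ t : ℝ, HasDerivAt W (-μ (w t)) t := by
    intro t
    have h8 := intervalIntegral.integral_hasDerivAt_right
      (hμwcont.intervalIntegrable 0 t)
      (hμwcont.stronglyMeasurableAtFilter _ _)
      hμwcont.continuousAt
    simp only [hW]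
    exact h8.neg
  have hW0 : W 0 = 0 := by simp only [hW]; simp
  have happ : ∀ t ∈ Set.Ico (0:ℝ) T', 0 ≤ W t := by
    refine hμmin T' hT'pos W hW0 ?_
    intro t ht
    have h9 := hWd t
    rwa [← hWw t ⟨ht.1, ht.2.le⟩] at h9
  -- contradiction
  have ht₂ : T'/2 ∈ Set.Ico (0:ℝ) T' := ⟨by linarith, by linarith⟩
  have ht₂' : T'/2 ∈ Set.Icc (0:ℝ) T' := ⟨by linarith, by linarith⟩
  have hc1 : 0 ≤ W (T'/2) := happ _ ht₂
  have hc2 : W (T'/2) = w (T'/2) := hWw _ ht₂'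
  have hc3 : w (T'/2) ≤ G (T'/2) := hwle _ ht₂'
  have hc4 : G (T'/2) < 0 := hGneg _ ⟨by linarith, by linarith [hT'leT]⟩
  linarith
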